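/- Let p : ℝ⁺₀ → ℝ be C¹ with p(0) = 0, p'(ρ) > 0 for all ρ > 0, and p convex. Then for all 0 < ρ₋ < ρ₊, one has ∫_{ρ₋}^{ρ₊} √(p'(r))/r dr < √((ρ₊ − ρ₋)(p(ρ₊) − p(ρ₋))/(ρ₋ ρ₊)). -/

import Mathlib

open Set intervalIntegral

lemma amgm_sqrt {x y : ℝ} (hx : 0 ≤ x) (hy : 0 ≤ y) :
    Real.sqrt (x * y) ≤ (x + y) / 2 := by
  nlinarith [Real.sq_sqrt hx, Real.sq_sqrt hy, Real.sqrt_nonneg x, Real.sqrt_nonneg y,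
    sq_nonneg (Real.sqrt x - Real.sqrt y), Real.sqrt_mul hx y]

lemma amgm_sqrt_lt {x y : ℝ} (hx : 0 ≤ x) (hy : 0 ≤ y) (hne : x ≠ y) :
    Real.sqrt (x * y) < (x + y) / 2 := by
  have h1 : Real.sqrt x ≠ Real.sqrt y := fun h => hne ((Real.sqrt_inj hx hy).mp h)
  have h2 : 0 < (Real.sqrt x - Real.sqrt y)^2 := sq_pos_of_ne_zero (sub_ne_zero.2 h1)
  nlinarith [Real.sq_sqrt hx, Real.sq_sqrt hy, Real.sqrt_mul hx y]

theorem stmt6 (p p' : ℝ → ℝ) (hp0 : p 0 = 0)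
    (hderiv : ∀ ρ ∈ Set.Ici (0 : ℝ), HasDerivWithinAt p (p' ρ) (Set.Ici 0) ρ)
    (hcont : ContinuousOn p' (Set.Ici 0))
    (hpos : ∀ ρ > (0 : ℝ), 0 < p' ρ)
    (hconv : ConvexOn ℝ (Set.Ici 0) p) :
    ∀ ρm ρp : ℝ, 0 < ρm → ρm < ρp →
      ∫ r in ρm..ρp, Real.sqrt (p' r) / r <
        Real.sqrt ((ρp - ρm) * (p ρp - p ρm) / (ρm * ρp)) := by
  intro a b ha hab
  have hb : 0 < b := ha.trans hab
  have hA : ∀ r : ℝ, 0 < r → HasDerivAt p (p' r) r := fun r hr =>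
    (hderiv r hr.le).hasDerivAt (Ici_mem_nhds hr)
  have hmono : ∀ x y : ℝ, 0 < x → x < y → p' x ≤ p' y := by
    intro x y hx hxy
    have hy : 0 < y := hx.trans hxy
    exact le_trans
      (hconv.le_slope_of_hasDerivAt hx.le hy.le hxy (hA x hx))
      (hconv.slope_le_of_hasDerivAt hx.le hy.le hxy (hA y hy))
  have hsub : Icc a b ⊆ Ici (0 : ℝ) := fun x hx => le_trans ha.le hx.1
  have hcont' : ContinuousOn p' (Icc a b) := hcont.mono hsub
  have hint_p' : IntervalIntegrable p' MeasureTheory.volume a b :=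
    hcont'.intervalIntegrable_of_Icc hab.le
  have hFTC : ∫ r in a..b, p' r = p b - p a := by
    apply intervalIntegral.integral_eq_sub_of_hasDerivAt
    · intro x hx
      rw [uIcc_of_le hab.le] at hx
      exact hA x (lt_of_lt_of_le ha hx.1)
    · exact hint_p'
  have hApos : 0 < p b - p a := by
    rw [← hFTC]
    exact intervalIntegral.intervalIntegral_pos_of_pos_on hint_p'
      (fun x hx => hpos x (ha.trans hx.1)) hab
  set A := p b - p a with hAdef
  have hBint : ∫ r in a..b, (r^2)⁻¹ = a⁻¹ - b⁻¹ := by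
    have hd : ∀ x ∈ uIcc a b, HasDerivAt (fun r => -r⁻¹) ((x^2)⁻¹) x := by
      intro x hx
      rw [uIcc_of_le hab.le] at hx
      have hx0 : x ≠ 0 := (lt_of_lt_of_le ha hx.1).ne'
      have h := (hasDerivAt_inv hx0).neg
      rw [neg_neg] at h
      exact h
    rw [intervalIntegral.integral_eq_sub_of_hasDerivAt hd]
    · ring
    · apply ContinuousOn.intervalIntegrable
      apply ContinuousOn.inv₀ (by fun_prop)
      intro x hx
      rw [uIcc_of_le hab.le] at hx
      have : 0 < x := lt_of_lt_of_le ha hx.1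
      positivity
  set B := a⁻¹ - b⁻¹ with hBdef
  have hBpos : 0 < B := by
    rw [hBdef, sub_pos]
    exact inv_strictAnti₀ ha hab
  set L := Real.sqrt (B / A) with hLdef
  have hLpos : 0 < L := Real.sqrt_pos.2 (by positivity)
  have key : ∀ r : ℝ, 0 < r →
      Real.sqrt (p' r) / r = Real.sqrt ((L * p' r) * (L⁻¹ * (r^2)⁻¹)) := by
    intro r hr
    rw [show (L * p' r) * (L⁻¹ * (r^2)⁻¹) = p' r * (r^2)⁻¹ by
      field_simp]
    rw [Real.sqrt_mul (hpos r hr).le, Real.sqrt_inv, Real.sqrt_sq hr.le, div_eq_mul_inv]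
  have hpt : ∀ r : ℝ, 0 < r →
      Real.sqrt (p' r) / r ≤ (L * p' r + L⁻¹ * (r^2)⁻¹) / 2 := by
    intro r hr
    rw [key r hr]
    exact amgm_sqrt (mul_nonneg hLpos.le (hpos r hr).le) (by positivity)
  have hstrict : ∃ c ∈ Icc a b,
      Real.sqrt (p' c) / c < (L * p' c + L⁻¹ * (c^2)⁻¹) / 2 := by
    have hne : L * p' a ≠ L⁻¹ * (a^2)⁻¹ ∨ L * p' b ≠ L⁻¹ * (b^2)⁻¹ := by
      by_contra h
      push_neg at h
      obtain ⟨h1, h2⟩ := h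
      have e1 : L^2 * (p' a * a^2) = 1 := by
        calc L^2 * (p' a * a^2) = (L * p' a) * (L * a^2) := by ring
          _ = (L⁻¹ * (a^2)⁻¹) * (L * a^2) := by rw [h1]
          _ = 1 := by field_simp
      have e2 : L^2 * (p' b * b^2) = 1 := by
        calc L^2 * (p' b * b^2) = (L * p' b) * (L * b^2) := by ring
          _ = (L⁻¹ * (b^2)⁻¹) * (L * b^2) := by rw [h2]
          _ = 1 := by field_simp
      have hm := hmono a b ha hab
      have hpa := hpos a ha
      have hsq : a^2 < b^2 := by nlinarith
      have h3 : p' a * a^2 < p' b * b^2 := by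
        nlinarith [mul_nonneg (sub_nonneg.2 hm) (sq_nonneg b),
          mul_pos hpa (show (0:ℝ) < b^2 - a^2 by linarith)]
      have h4 := mul_lt_mul_of_pos_left h3 (show (0:ℝ) < L^2 by positivity)
      rw [e1, e2] at h4
      exact lt_irrefl _ h4
    have mk : ∀ c : ℝ, 0 < c → L * p' c ≠ L⁻¹ * (c^2)⁻¹ →
        Real.sqrt (p' c) / c < (L * p' c + L⁻¹ * (c^2)⁻¹) / 2 := by
      intro c hc hnec
      rw [key c hc]
      exact amgm_sqrt_lt (mul_nonneg hLpos.le (hpos c hc).le) (by positivity) hnec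
    rcases hne with h | h
    · exact ⟨a, ⟨le_refl a, hab.le⟩, mk a ha h⟩
    · exact ⟨b, ⟨hab.le, le_refl b⟩, mk b hb h⟩
  have hlt : (∫ r in a..b, Real.sqrt (p' r) / r) <
      ∫ r in a..b, (L * p' r + L⁻¹ * (r^2)⁻¹) / 2 := by
    apply intervalIntegral.integral_lt_integral_of_continuousOn_of_le_of_exists_lt hab
    · exact ((hcont'.sqrt).div continuousOn_id
        (fun x hx => (lt_of_lt_of_le ha hx.1).ne'))
    · apply ContinuousOn.div_const
      apply ContinuousOn.add (continuousOn_const.mul hcont')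
      apply continuousOn_const.mul
      apply ContinuousOn.inv₀ (by fun_prop)
      intro x hx
      have : 0 < x := lt_of_lt_of_le ha hx.1
      positivity
    · exact fun x hx => hpt x (ha.trans hx.1)
    · exact hstrict
  have hint_inv : IntervalIntegrable (fun r => (r^2)⁻¹) MeasureTheory.volume a b := by
    apply ContinuousOn.intervalIntegrable
    apply ContinuousOn.inv₀ (by fun_prop)
    intro x hx
    rw [uIcc_of_le hab.le] at hx
    have : 0 < x := lt_of_lt_of_le ha hx.1
    positivity
  have hval : (∫ r in a..b, (L * p' r + L⁻¹ * (r^2)⁻¹) / 2) = (L * A + L⁻¹ * B) / 2 := by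
    rw [intervalIntegral.integral_div, intervalIntegral.integral_add
      (hint_p'.const_mul L) (hint_inv.const_mul L⁻¹),
      intervalIntegral.integral_const_mul, intervalIntegral.integral_const_mul,
      hFTC, hBint]
  have hopt : (L * A + L⁻¹ * B) / 2 = Real.sqrt (A * B) := by
    have hsa : 0 < Real.sqrt A := Real.sqrt_pos.2 hApos
    have hsb : 0 < Real.sqrt B := Real.sqrt_pos.2 hBpos
    have hL' : L = Real.sqrt B / Real.sqrt A := by
      rw [hLdef, Real.sqrt_div hBpos.le]
    rw [Real.sqrt_mul hApos.le, hL']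
    field_simp
    nlinarith [Real.sq_sqrt hApos.le, Real.sq_sqrt hBpos.le,
      mul_pos hsa hsb]
  have htarget : (b - a) * A / (a * b) = A * B := by
    rw [hBdef]
    field_simp
  rw [htarget, ← hopt, ← hval]
  exact hlt
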